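/- Let (X,d) be a compact metric space, F a finite nonempty set of continuous self-maps of X, Ψ a set of nonempty closed subsets of X admissible for F, Δ a topology on Ψ, and β a base for the topology of X such that for every U ∈ β the set U⁺ = {A ∈ Ψ : A ⊆ U} is nonempty and Δ-open. If the induced map F̄ : (Ψ,Δ) → (Ψ,Δ) is topologically transitive, then F is super-transitive. -/

import Mathlib

open Set Filter Metric TopologicalSpace

/-- The image of a set `A` under a relation given by a family `F` of self-maps:
`F(A) = ⋃_{f ∈ F} f(A)`. -/
def relImage {X : Type*} (F : Set (X → X)) (A : Set X) : Set X :=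
  ⋃ f ∈ F, f '' A

/-- `F^n(x)`: the set of values at `x` of all `n`-fold compositions of members of `F`. -/
def relIter {X : Type*} (F : Set (X → X)) (n : ℕ) (x : X) : Set X :=
  (relImage F)^[n] {x}

/-- `F` is super-transitive if for every pair of nonempty open sets `U, V` there exist
`x ∈ U` and `n ≥ 1` with `F^n(x) ⊆ V`. -/
def SuperTransitive {X : Type*} [TopologicalSpace X] (F : Set (X → X)) : Prop :=
  ∀ U V : Set X, IsOpen U → IsOpen V → U.Nonempty → V.Nonempty →
    ∃ x ∈ U, ∃ n : ℕ, 1 ≤ n ∧ relIter F n x ⊆ V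

/-- A self-map `g` of a topological space is topologically transitive if for every pair of
nonempty open sets `𝒰, 𝒱` there is `n ≥ 1` with `g^n(𝒰) ∩ 𝒱 ≠ ∅`. -/
def TopTransitive {Y : Type*} [TopologicalSpace Y] (g : Y → Y) : Prop :=
  ∀ U V : Set Y, IsOpen U → IsOpen V → U.Nonempty → V.Nonempty →
    ∃ n : ℕ, 1 ≤ n ∧ (g^[n] '' U ∩ V).Nonempty

/-- If `Ψ` is a family of nonempty closed subsets of `X` admissible for `F`, `Δ` is a topology
on `Ψ`, and `β` is a base of the topology of `X` such that `U⁺` is nonempty and `Δ`-open for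
every `U ∈ β`, then topological transitivity of the induced map `F̄ : (Ψ, Δ) → (Ψ, Δ)` implies
super-transitivity of `F`. -/
theorem stmt_3 {X : Type*} [MetricSpace X] [CompactSpace X]
    (F : Set (X → X)) (hFfin : F.Finite) (hFne : F.Nonempty)
    (hFcont : ∀ f ∈ F, Continuous f)
    (Ψ : Set (Set X)) (hΨ : ∀ A ∈ Ψ, A.Nonempty ∧ IsClosed A)
    (hadm : ∀ A ∈ Ψ, IsClosed (relImage F A) ∧ relImage F A ∈ Ψ)
    [Δ : TopologicalSpace ↥Ψ]
    (Fbar : ↥Ψ → ↥Ψ) (hFbar : ∀ A : ↥Ψ, (Fbar A : Set X) = relImage F (A : Set X))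
    (β : Set (Set X)) (hβ : IsTopologicalBasis β)
    (hplus : ∀ U ∈ β, {A : ↥Ψ | (A : Set X) ⊆ U}.Nonempty ∧
      IsOpen {A : ↥Ψ | (A : Set X) ⊆ U})
    (htrans : TopTransitive Fbar) :
    SuperTransitive F := by

  intro U V hU hV ⟨u,hu⟩ ⟨v,hv⟩
  obtain ⟨U', hU'β, huU', hU'U⟩ := hβ.exists_subset_of_mem_open hu hU
  obtain ⟨V', hV'β, hvV', hV'V⟩ := hβ.exists_subset_of_mem_open hv hV
  obtain ⟨hUne, hUopen⟩ := hplus U' hU'β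
  obtain ⟨hVne, hVopen⟩ := hplus V' hV'β
  obtain ⟨n, hn1, B, ⟨A, hAU, hAB⟩, hBV⟩ := htrans _ _ hUopen hVopen hUne hVne
  have hmono : Monotone (relImage F) := fun s t hst =>
    Set.iUnion₂_mono fun f _ => Set.image_mono (f := f) hst
  have key : ∀ m : ℕ, (Fbar^[m] A : Set X) = (relImage F)^[m] (A : Set X) := by
    intro m
    induction m with
    | zero => rfl
    | succ m ih =>
      rw [Function.iterate_succ_apply', Function.iterate_succ_apply', hFbar, ih]
  obtain ⟨x, hxA⟩ := (hΨ A A.2).1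
  refine ⟨x, hU'U (hAU hxA), n, hn1, ?_⟩
  have h1 : relIter F n x ⊆ (relImage F)^[n] (A : Set X) := by
    have : ({x} : Set X) ⊆ (A : Set X) := Set.singleton_subset_iff.2 hxA
    exact hmono.iterate n this
  refine h1.trans ?_
  rw [← key, hAB]
  exact fun y hy => hV'V (hBV hy)
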